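/- Let p ∈ H and let L_p : ℝ⁴ → ℝ⁴ be the left translation L_p(y) = (p₁y₁−p₂y₂+p₃y₃+p₄y₄, p₂y₁+p₁y₂+p₄y₃−p₃y₄, p₃y₁+p₄y₂+p₁y₃−p₂y₄, p₄y₁−p₃y₂+p₂y₃+p₁y₄). If γ : [0,1] → H is a differentiable curve and c = L_p ∘ γ, then: (1) c(s) ∈ H for all s; (2) the horizontal coordinates are preserved, α_c(s) = α_γ(s) and β_c(s) = β_γ(s) for all s; (3) if γ is horizontal (its Y-coordinate ⟨γ̇, Y(γ)⟩ vanishes identically) then c is horizontal. Consequently L_p maps horizontal timelike future-directed curves to horizontal timelike future-directed curves, and horizontal spacelike (resp. lightlike) curves to horizontal spacelike (resp. lightlike) curves. -/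
import Mathlib


open Real Set

noncomputable section

/-- Pseudo-Euclidean inner product of signature (2,2) on ℝ⁴. -/
def ip (x y : Fin 4 → ℝ) : ℝ :=
  -(x 0 * y 0) - x 1 * y 1 + x 2 * y 2 + x 3 * y 3

/-- Anti-de Sitter space H = {x : ⟨x,x⟩ = -1}. -/
def AdS : Set (Fin 4 → ℝ) := {x | ip x x = -1}

/-- The vector field T(x) = (−x₂, x₁, x₄, −x₃). -/
def Tf (x : Fin 4 → ℝ) : Fin 4 → ℝ := ![-(x 1), x 0, x 3, -(x 2)]

/-- The vector field X(x) = (x₃, x₄, x₁, x₂). -/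
def Xf (x : Fin 4 → ℝ) : Fin 4 → ℝ := ![x 2, x 3, x 0, x 1]

/-- The vector field Y(x) = (x₄, −x₃, −x₂, x₁). -/
def Yf (x : Fin 4 → ℝ) : Fin 4 → ℝ := ![x 3, -(x 2), -(x 1), x 0]

/-- The normal vector field N(x) = x. -/
def Nf (x : Fin 4 → ℝ) : Fin 4 → ℝ := x

/-- α(s) = ⟨ċ(s), T(c(s))⟩. -/
def alphaC (c : ℝ → Fin 4 → ℝ) (s : ℝ) : ℝ := ip (deriv c s) (Tf (c s))

/-- β(s) = ⟨ċ(s), X(c(s))⟩. -/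
def betaC (c : ℝ → Fin 4 → ℝ) (s : ℝ) : ℝ := ip (deriv c s) (Xf (c s))

/-- γ(s) = ⟨ċ(s), Y(c(s))⟩. -/
def gammaC (c : ℝ → Fin 4 → ℝ) (s : ℝ) : ℝ := ip (deriv c s) (Yf (c s))

/-- Left translation L_p(y) on the anti-de Sitter group. -/
def Lmul (p y : Fin 4 → ℝ) : Fin 4 → ℝ :=
  ![p 0 * y 0 - p 1 * y 1 + p 2 * y 2 + p 3 * y 3,
    p 1 * y 0 + p 0 * y 1 + p 3 * y 2 - p 2 * y 3,
    p 2 * y 0 + p 3 * y 1 + p 0 * y 2 - p 1 * y 3,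
    p 3 * y 0 - p 2 * y 1 + p 1 * y 2 + p 0 * y 3]

/-- Horizontal with respect to span{T,X} on [0,1]: γ ≡ 0. -/
def HorizontalTX (c : ℝ → Fin 4 → ℝ) : Prop :=
  ∀ s ∈ Set.Icc (0:ℝ) 1, gammaC c s = 0

/-- Timelike curve on [0,1]. -/
def TimelikeC (c : ℝ → Fin 4 → ℝ) : Prop :=
  ∀ s ∈ Set.Icc (0:ℝ) 1, ip (deriv c s) (deriv c s) < 0

/-- Spacelike curve on [0,1]. -/
def SpacelikeC (c : ℝ → Fin 4 → ℝ) : Prop :=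
  ∀ s ∈ Set.Icc (0:ℝ) 1, 0 < ip (deriv c s) (deriv c s)

/-- Lightlike curve on [0,1]. -/
def LightlikeC (c : ℝ → Fin 4 → ℝ) : Prop :=
  ∀ s ∈ Set.Icc (0:ℝ) 1, ip (deriv c s) (deriv c s) = 0 ∧ deriv c s ≠ 0

/-- Future-directed (timelike) curve on [0,1]: α < 0. -/
def FutureC (c : ℝ → Fin 4 → ℝ) : Prop :=
  ∀ s ∈ Set.Icc (0:ℝ) 1, alphaC c s < 0


lemma ip_Lmul (p u v : Fin 4 → ℝ) (h : ip p p = -1) :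
    ip (Lmul p u) (Lmul p v) = ip u v := by
  simp only [ip, Lmul] at *
  simp only [Matrix.cons_val_zero, Matrix.cons_val_one, Matrix.head_cons,
    Matrix.cons_val_two, Matrix.tail_cons, Matrix.cons_val_three]
  linear_combination (-(-(u 0 * v 0) - u 1 * v 1 + u 2 * v 2 + u 3 * v 3)) * h

lemma ip_Lmul_T (p u y : Fin 4 → ℝ) (h : ip p p = -1) :
    ip (Lmul p u) (Tf (Lmul p y)) = ip u (Tf y) := by
  simp only [ip, Lmul, Tf] at *
  simp only [Matrix.cons_val_zero, Matrix.cons_val_one, Matrix.head_cons,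
    Matrix.cons_val_two, Matrix.tail_cons, Matrix.cons_val_three]
  linear_combination (-(-(u 0 * -(y 1)) - u 1 * y 0 + u 2 * y 3 + u 3 * -(y 2))) * h

lemma ip_Lmul_X (p u y : Fin 4 → ℝ) (h : ip p p = -1) :
    ip (Lmul p u) (Xf (Lmul p y)) = ip u (Xf y) := by
  simp only [ip, Lmul, Xf] at *
  simp only [Matrix.cons_val_zero, Matrix.cons_val_one, Matrix.head_cons,
    Matrix.cons_val_two, Matrix.tail_cons, Matrix.cons_val_three]
  linear_combination (-(-(u 0 * y 2) - u 1 * y 3 + u 2 * y 0 + u 3 * y 1)) * h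

lemma ip_Lmul_Y (p u y : Fin 4 → ℝ) (h : ip p p = -1) :
    ip (Lmul p u) (Yf (Lmul p y)) = ip u (Yf y) := by
  simp only [ip, Lmul, Yf] at *
  simp only [Matrix.cons_val_zero, Matrix.cons_val_one, Matrix.head_cons,
    Matrix.cons_val_two, Matrix.tail_cons, Matrix.cons_val_three]
  linear_combination (-(-(u 0 * y 3) - u 1 * -(y 2) + u 2 * -(y 1) + u 3 * y 0)) * h

lemma lmul_ne_zero (p v : Fin 4 → ℝ) (h : ip p p = -1) (hv : v ≠ 0) : Lmul p v ≠ 0 := by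
  intro h0
  apply hv
  simp only [ip] at h
  have e0 := congrFun h0 0
  have e1 := congrFun h0 1
  have e2 := congrFun h0 2
  have e3 := congrFun h0 3
  simp only [Lmul, Matrix.cons_val_zero, Matrix.cons_val_one, Matrix.head_cons,
    Matrix.cons_val_two, Matrix.tail_cons, Matrix.cons_val_three, Pi.zero_apply] at e0 e1 e2 e3
  funext i
  fin_cases i
  · show v 0 = 0
    linear_combination p 0 * e0 + p 1 * e1 - p 2 * e2 - p 3 * e3 + v 0 * h
  · show v 1 = 0
    linear_combination (-(p 1)) * e0 + p 0 * e1 - p 3 * e2 + p 2 * e3 + v 1 * h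
  · show v 2 = 0
    linear_combination (-(p 2)) * e0 - p 3 * e1 + p 0 * e2 + p 1 * e3 + v 2 * h
  · show v 3 = 0
    linear_combination (-(p 3)) * e0 + p 2 * e1 - p 1 * e2 + p 0 * e3 + v 3 * h

lemma lmul_hasDerivAt (p : Fin 4 → ℝ) (g : ℝ → Fin 4 → ℝ) (s : ℝ)
    (hd : DifferentiableAt ℝ g s) :
    HasDerivAt (fun t => Lmul p (g t)) (Lmul p (deriv g s)) s := by
  have hi : ∀ i, HasDerivAt (fun t => g t i) (deriv g s i) s :=
    hasDerivAt_pi.mp hd.hasDerivAt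
  apply hasDerivAt_pi.mpr
  intro i
  fin_cases i
  · show HasDerivAt (fun t => p 0 * g t 0 - p 1 * g t 1 + p 2 * g t 2 + p 3 * g t 3)
      (p 0 * deriv g s 0 - p 1 * deriv g s 1 + p 2 * deriv g s 2 + p 3 * deriv g s 3) s
    exact ((((hi 0).const_mul (p 0)).sub ((hi 1).const_mul (p 1))).add
      ((hi 2).const_mul (p 2))).add ((hi 3).const_mul (p 3))
  · show HasDerivAt (fun t => p 1 * g t 0 + p 0 * g t 1 + p 3 * g t 2 - p 2 * g t 3)
      (p 1 * deriv g s 0 + p 0 * deriv g s 1 + p 3 * deriv g s 2 - p 2 * deriv g s 3) s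
    exact ((((hi 0).const_mul (p 1)).add ((hi 1).const_mul (p 0))).add
      ((hi 2).const_mul (p 3))).sub ((hi 3).const_mul (p 2))
  · show HasDerivAt (fun t => p 2 * g t 0 + p 3 * g t 1 + p 0 * g t 2 - p 1 * g t 3)
      (p 2 * deriv g s 0 + p 3 * deriv g s 1 + p 0 * deriv g s 2 - p 1 * deriv g s 3) s
    exact ((((hi 0).const_mul (p 2)).add ((hi 1).const_mul (p 3))).add
      ((hi 2).const_mul (p 0))).sub ((hi 3).const_mul (p 1))
  · show HasDerivAt (fun t => p 3 * g t 0 - p 2 * g t 1 + p 1 * g t 2 + p 0 * g t 3)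
      (p 3 * deriv g s 0 - p 2 * deriv g s 1 + p 1 * deriv g s 2 + p 0 * deriv g s 3) s
    exact ((((hi 0).const_mul (p 3)).sub ((hi 1).const_mul (p 2))).add
      ((hi 2).const_mul (p 1))).add ((hi 3).const_mul (p 0))


/-- left translations preserve AdS, the horizontal coordinates α, β,
horizontality, and the causal character of horizontal curves. -/
theorem left_translation_preserves (p : Fin 4 → ℝ) (hp : p ∈ AdS)
    (g : ℝ → Fin 4 → ℝ)
    (hd : ∀ s ∈ Set.Icc (0:ℝ) 1, DifferentiableAt ℝ g s)
    (hg : ∀ s ∈ Set.Icc (0:ℝ) 1, g s ∈ AdS) :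
    (∀ s ∈ Set.Icc (0:ℝ) 1, Lmul p (g s) ∈ AdS) ∧
    (∀ s ∈ Set.Icc (0:ℝ) 1,
      alphaC (fun t => Lmul p (g t)) s = alphaC g s ∧
      betaC (fun t => Lmul p (g t)) s = betaC g s) ∧
    (HorizontalTX g → HorizontalTX (fun t => Lmul p (g t))) ∧
    (HorizontalTX g → TimelikeC g → FutureC g →
      TimelikeC (fun t => Lmul p (g t)) ∧ FutureC (fun t => Lmul p (g t))) ∧
    (HorizontalTX g → SpacelikeC g → SpacelikeC (fun t => Lmul p (g t))) ∧
    (HorizontalTX g → LightlikeC g → LightlikeC (fun t => Lmul p (g t))) := by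
  have hp' : ip p p = -1 := hp
  have key : ∀ s ∈ Set.Icc (0:ℝ) 1,
      deriv (fun t => Lmul p (g t)) s = Lmul p (deriv g s) := fun s hs =>
    (lmul_hasDerivAt p g s (hd s hs)).deriv
  refine ⟨?_, ?_, ?_, ?_, ?_, ?_⟩
  · intro s hs
    show ip (Lmul p (g s)) (Lmul p (g s)) = -1
    rw [ip_Lmul p _ _ hp']
    exact hg s hs
  · intro s hs
    constructor
    · show ip (deriv (fun t => Lmul p (g t)) s) (Tf (Lmul p (g s))) = _
      rw [key s hs, ip_Lmul_T p _ _ hp']; rfl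
    · show ip (deriv (fun t => Lmul p (g t)) s) (Xf (Lmul p (g s))) = _
      rw [key s hs, ip_Lmul_X p _ _ hp']; rfl
  · intro hH s hs
    show ip (deriv (fun t => Lmul p (g t)) s) (Yf (Lmul p (g s))) = 0
    rw [key s hs, ip_Lmul_Y p _ _ hp']
    exact hH s hs
  · intro _ hT hF
    constructor
    · intro s hs
      show ip (deriv (fun t => Lmul p (g t)) s) (deriv (fun t => Lmul p (g t)) s) < 0
      rw [key s hs, ip_Lmul p _ _ hp']
      exact hT s hs
    · intro s hs
      show ip (deriv (fun t => Lmul p (g t)) s) (Tf (Lmul p (g s))) < 0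
      rw [key s hs, ip_Lmul_T p _ _ hp']
      exact hF s hs
  · intro _ hS s hs
    show 0 < ip (deriv (fun t => Lmul p (g t)) s) (deriv (fun t => Lmul p (g t)) s)
    rw [key s hs, ip_Lmul p _ _ hp']
    exact hS s hs
  · intro _ hL s hs
    constructor
    · show ip (deriv (fun t => Lmul p (g t)) s) (deriv (fun t => Lmul p (g t)) s) = 0
      rw [key s hs, ip_Lmul p _ _ hp']
      exact (hL s hs).1
    · rw [key s hs]
      exact lmul_ne_zero p _ hp' (hL s hs).2
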